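/- Fix T₀ > 0 and R'' ∈ ℝ with T₀ + R'' > 0, τ > 0, and δ ∈ (0,1/2); let f = f_δ. Then for every three times continuously differentiable compactly supported real-valued ψ on Ω_{T₀,R''}: ⟨[P₁,P₂]ψ, ψ⟩ = ∫_{Ω_{T₀,R''}} τ·B(ψ)·t² dx dt + 2τ⟨ψ, (∂^ν □f)∂_ν ψ⟩ − 8τ(δ+1)⟨t^{−δ−3}ψ, ∂_tψ⟩, where [P₁,P₂]ψ := P₁(P₂ψ) − P₂(P₁ψ) and B(ψ) := 4(∂^β∂^ν f)(∂_βψ)(∂_νψ) + 4τ²ψ²(∂_α f)(∂_β f)(∂^α∂^β f). -/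

import Mathlib

noncomputable section
open MeasureTheory Real Set Filter Topology

namespace UCP

/-- Spacetime `ℝ^{1+3}`: a point is `(t, x)` with `x ∈ ℝ³`. -/
abbrev Spc : Type := ℝ × EuclideanSpace ℝ (Fin 3)

/-- Coordinate directions `e_α`, `α = 0,1,2,3` (`e_0` is the time direction). -/
def eVec (α : Fin 4) : Spc :=
  Fin.cases ((1 : ℝ), (0 : EuclideanSpace ℝ (Fin 3)))
    (fun i => ((0 : ℝ), EuclideanSpace.single i (1 : ℝ))) α

/-- The partial derivative `∂_α u`. -/
def pd (α : Fin 4) (u : Spc → ℝ) (p : Spc) : ℝ := fderiv ℝ u p (eVec α)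

/-- `∂_t u`. -/
def dt (u : Spc → ℝ) : Spc → ℝ := pd 0 u

/-- `∂_i u`, `i = 1,2,3`. -/
def dxi (i : Fin 3) (u : Spc → ℝ) : Spc → ℝ := pd i.succ u

/-- The d'Alembertian `□u = -∂_t² u + Δ_x u`. -/
def box (u : Spc → ℝ) (p : Spc) : ℝ :=
  - dt (dt u) p + ∑ i : Fin 3, dxi i (dxi i u) p

/-- Signs of the Minkowski metric `diag(-1,1,1,1)`, so that `∂^α = eta α • ∂_α`. -/
def eta (α : Fin 4) : ℝ := if α = 0 then -1 else 1

/-- `r = |x|`. -/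
def rr (p : Spc) : ℝ := ‖p.2‖

/-- The radial derivative `∂_r u = Σ_i (x_i/r) ∂_i u`. -/
def dr (u : Spc → ℝ) (p : Spc) : ℝ := ∑ i : Fin 3, (p.2 i / rr p) * dxi i u p

/-- `ω̂ = (-1, x/r)` as a `Fin 4`-indexed family. -/
def hatom (p : Spc) (α : Fin 4) : ℝ := Fin.cases (-1 : ℝ) (fun i => p.2 i / rr p) α

/-- The region `Ω_{T₀,R''} = {t ≥ T₀, r - t > R''}`. -/
def Om (T₀ R'' : ℝ) : Set Spc := {p | T₀ ≤ p.1 ∧ R'' < rr p - p.1}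

/-- The open region `{t > T₀, r - t > R''}`. -/
def OmO (T₀ R'' : ℝ) : Set Spc := {p | T₀ < p.1 ∧ R'' < rr p - p.1}

/-- The weight `f_δ(t,x) = r - t - δ⁻¹ t^{-δ}`. -/
def fdel (δ : ℝ) (p : Spc) : ℝ := rr p - p.1 - δ⁻¹ * p.1 ^ (-δ)

/-- `P₁ψ = □ψ + τ² (∂^α f ∂_α f) ψ`. -/
def P1 (τ δ : ℝ) (ψ : Spc → ℝ) (p : Spc) : ℝ :=
  box ψ p + τ ^ 2 * (∑ α : Fin 4, eta α * pd α (fdel δ) p * pd α (fdel δ) p) * ψ p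

/-- `P₂ψ = -2τ ∂^α f ∂_α ψ`. -/
def P2 (τ δ : ℝ) (ψ : Spc → ℝ) (p : Spc) : ℝ :=
  -2 * τ * ∑ α : Fin 4, eta α * pd α (fdel δ) p * pd α ψ p

/-- The weighted inner product `⟨F,G⟩ = ∫_{Ω_{T₀,R''}} F G t² dx dt`. -/
def ip (T₀ R'' : ℝ) (F G : Spc → ℝ) : ℝ := ∫ p in Om T₀ R'', F p * G p * p.1 ^ 2

/-- The weighted norm `‖F‖ = ⟨F,F⟩^{1/2}`. -/
def nrm (T₀ R'' : ℝ) (F : Spc → ℝ) : ℝ := Real.sqrt (ip T₀ R'' F F)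

/-- The quadratic form `B(ψ) = 4(∂^β∂^ν f)(∂_βψ)(∂_νψ) + 4τ²ψ²(∂_α f)(∂_β f)(∂^α∂^β f)`. -/
def Bform (τ δ : ℝ) (ψ : Spc → ℝ) (p : Spc) : ℝ :=
  4 * (∑ β : Fin 4, ∑ ν : Fin 4,
        eta β * eta ν * pd β (pd ν (fdel δ)) p * pd β ψ p * pd ν ψ p)
    + 4 * τ ^ 2 * ψ p ^ 2 *
      ∑ α : Fin 4, ∑ β : Fin 4,
        pd α (fdel δ) p * pd β (fdel δ) p * (eta α * eta β * pd α (pd β (fdel δ)) p)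


/-! ### Toolbox for partial derivatives -/

variable {u v : Spc → ℝ} {p : Spc} {α β γ : Fin 4}

lemma pd_congr (h : u =ᶠ[𝓝 p] v) : pd α u p = pd α v p := by
  unfold pd; rw [h.fderiv_eq]

lemma pd_congr_on {U : Set Spc} (hU : IsOpen U) (h : ∀ q ∈ U, u q = v q) (hp : p ∈ U) :
    pd α u p = pd α v p :=
  pd_congr (Filter.eventuallyEq_of_mem (hU.mem_nhds hp) h)

lemma pd_contDiffAt {m n : ℕ} (h : ContDiffAt ℝ n u p) (hmn : m + 1 ≤ n) (α : Fin 4) :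
    ContDiffAt ℝ m (pd α u) p :=
  (h.fderiv_right (by exact_mod_cast hmn)).clm_apply contDiffAt_const

lemma pd_diffAt {n : ℕ} (h : ContDiffAt ℝ n u p) (hn : 2 ≤ n) (α : Fin 4) :
    DifferentiableAt ℝ (pd α u) p :=
  (pd_contDiffAt h hn α).differentiableAt (by simp)

lemma pd_comm (h : ContDiffAt ℝ 2 u p) : pd α (pd β u) p = pd β (pd α u) p := by
  have hs := h.isSymmSndFDerivAt (by simp)
  have hd : DifferentiableAt ℝ (fderiv ℝ u) p :=
    (h.fderiv_right (m := 1) (by norm_num)).differentiableAt (by norm_num)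
  unfold pd
  rw [fderiv_clm_apply hd (differentiableAt_const (eVec β)),
      fderiv_clm_apply hd (differentiableAt_const (eVec α))]
  simp [hs (eVec α) (eVec β)]

lemma pd_add (hu : DifferentiableAt ℝ u p) (hv : DifferentiableAt ℝ v p) :
    pd α (fun q => u q + v q) p = pd α u p + pd α v p := by
  unfold pd; rw [fderiv_fun_add hu hv]; simp

lemma pd_mul (hu : DifferentiableAt ℝ u p) (hv : DifferentiableAt ℝ v p) :
    pd α (fun q => u q * v q) p = pd α u p * v p + u p * pd α v p := by
  unfold pd; rw [fderiv_fun_mul hu hv]; simp; ring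

lemma pd_const_mul (hu : DifferentiableAt ℝ u p) (c : ℝ) :
    pd α (fun q => c * u q) p = c * pd α u p := by
  unfold pd; rw [fderiv_const_mul hu c]; simp

lemma pd_sum {ι : Type*} (s : Finset ι) {g : ι → Spc → ℝ}
    (h : ∀ i ∈ s, DifferentiableAt ℝ (g i) p) :
    pd α (fun q => ∑ i ∈ s, g i q) p = ∑ i ∈ s, pd α (g i) p := by
  unfold pd; rw [fderiv_fun_sum h]; simp

lemma pd_const (c : ℝ) : pd α (fun _ => c) p = 0 := by
  unfold pd; simp

lemma box_eq (u : Spc → ℝ) (p : Spc) : box u p = ∑ γ : Fin 4, eta γ * pd γ (pd γ u) p := by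
  rw [Fin.sum_univ_succ]
  simp [box, dt, dxi, eta, Fin.succ_ne_zero]

lemma pd_cmul {w : Spc → ℝ} (c : ℝ) (h : DifferentiableAt ℝ w p) :
    pd β (fun q => c * w q) p = c * pd β w p := pd_const_mul h c

lemma pd_cmul_mul {w1 w2 : Spc → ℝ} (c : ℝ) (h1 : DifferentiableAt ℝ w1 p)
    (h2 : DifferentiableAt ℝ w2 p) :
    pd β (fun q => c * w1 q * w2 q) p = c * (pd β w1 p * w2 p + w1 p * pd β w2 p) := by
  have e : pd β (fun q => (c * w1 q) * w2 q) p
      = pd β (fun q => c * w1 q) p * w2 p + (c * w1 p) * pd β w2 p :=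
    pd_mul (h1.const_mul c) h2
  rw [e, pd_cmul c h1]; ring

lemma pd_cmul_addmul {w1 w2 w3 w4 : Spc → ℝ} (c : ℝ) (h1 : DifferentiableAt ℝ w1 p)
    (h2 : DifferentiableAt ℝ w2 p) (h3 : DifferentiableAt ℝ w3 p)
    (h4 : DifferentiableAt ℝ w4 p) :
    pd β (fun q => c * (w1 q * w2 q + w3 q * w4 q)) p
      = c * ((pd β w1 p * w2 p + w1 p * pd β w2 p)
          + (pd β w3 p * w4 p + w3 p * pd β w4 p)) := by
  have e : pd β (fun q => c * ((fun q => w1 q * w2 q + w3 q * w4 q) q)) p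
      = c * pd β (fun q => w1 q * w2 q + w3 q * w4 q) p :=
    pd_cmul c ((h1.mul h2).add (h3.mul h4))
  rw [e, pd_add (h1.fun_mul h2) (h3.fun_mul h4), pd_mul h1 h2, pd_mul h3 h4]


/-! ### Pointwise computation on the open set where `fdel` is smooth -/

section Pointwise

variable {τ δ : ℝ} {ψ : Spc → ℝ} {U : Set Spc}

lemma dF_diff (hF : ∀ q ∈ U, ContDiffAt ℝ 3 (fdel δ) q) (hp : p ∈ U) (α : Fin 4) :
    DifferentiableAt ℝ (pd α (fdel δ)) p :=
  pd_diffAt (hF p hp) (by norm_num) α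

lemma dF2_diff (hF : ∀ q ∈ U, ContDiffAt ℝ 3 (fdel δ) q) (hp : p ∈ U) (α β : Fin 4) :
    DifferentiableAt ℝ (pd α (pd β (fdel δ))) p :=
  pd_diffAt (pd_contDiffAt (hF p hp) (by norm_num) β) (le_refl 2) α

lemma dψ1_diff (hψ : ContDiff ℝ 3 ψ) (p : Spc) (α : Fin 4) :
    DifferentiableAt ℝ (pd α ψ) p :=
  pd_diffAt hψ.contDiffAt (by norm_num) α

lemma dψ2_diff (hψ : ContDiff ℝ 3 ψ) (p : Spc) (α β : Fin 4) :
    DifferentiableAt ℝ (pd α (pd β ψ)) p :=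
  pd_diffAt (pd_contDiffAt hψ.contDiffAt (by norm_num) β) (le_refl 2) α

lemma cψ2comm (hψ : ContDiff ℝ 3 ψ) (α β : Fin 4) : pd α (pd β ψ) = pd β (pd α ψ) :=
  funext fun q => pd_comm (hψ.contDiffAt.of_le (by norm_num))

/-- First derivative of `P₂ψ`. -/
lemma L1 (hψ : ContDiff ℝ 3 ψ) (hF : ∀ q ∈ U, ContDiffAt ℝ 3 (fdel δ) q)
    (hp : p ∈ U) (β : Fin 4) :
    pd β (P2 τ δ ψ) p = -2*τ*∑ α : Fin 4, eta α *
      (pd β (pd α (fdel δ)) p * pd α ψ p + pd α (fdel δ) p * pd β (pd α ψ) p) := by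
  have e : P2 τ δ ψ
      = fun q => -2*τ* (fun q => ∑ α : Fin 4, eta α * pd α (fdel δ) q * pd α ψ q) q := rfl
  rw [e, pd_cmul (-2*τ) (DifferentiableAt.fun_sum fun α _ =>
    ((dF_diff hF hp α).const_mul (eta α)).fun_mul (dψ1_diff hψ p α)),
    pd_sum _ (fun α _ => ((dF_diff hF hp α).const_mul (eta α)).fun_mul (dψ1_diff hψ p α))]
  congr 1
  refine Finset.sum_congr rfl fun α _ => ?_
  exact pd_cmul_mul (eta α) (dF_diff hF hp α) (dψ1_diff hψ p α)

/-- Second derivatives of `P₂ψ`. -/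
lemma L2 (hψ : ContDiff ℝ 3 ψ) (hF : ∀ q ∈ U, ContDiffAt ℝ 3 (fdel δ) q)
    (hUo : IsOpen U) (hp : p ∈ U) (γ β : Fin 4) :
    pd γ (pd β (P2 τ δ ψ)) p = -2*τ*∑ α : Fin 4, eta α *
      ((pd γ (pd β (pd α (fdel δ))) p * pd α ψ p
          + pd β (pd α (fdel δ)) p * pd γ (pd α ψ) p)
        + (pd γ (pd α (fdel δ)) p * pd β (pd α ψ) p
          + pd α (fdel δ) p * pd γ (pd β (pd α ψ)) p)) := by
  have e : pd γ (pd β (P2 τ δ ψ)) p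
      = pd γ (fun q => -2*τ* (fun q => ∑ α : Fin 4, eta α *
          (pd β (pd α (fdel δ)) q * pd α ψ q + pd α (fdel δ) q * pd β (pd α ψ) q)) q) p :=
    pd_congr_on hUo (fun q hq => L1 hψ hF hq β) hp
  have hdiff : ∀ α : Fin 4, α ∈ (Finset.univ : Finset (Fin 4)) → DifferentiableAt ℝ
      (fun q => eta α * (pd β (pd α (fdel δ)) q * pd α ψ q
        + pd α (fdel δ) q * pd β (pd α ψ) q)) p := fun α _ =>
    (((dF2_diff hF hp β α).mul (dψ1_diff hψ p α)).add
      ((dF_diff hF hp α).mul (dψ2_diff hψ p β α))).const_mul (eta α)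
  rw [e, pd_cmul (-2*τ) (DifferentiableAt.fun_sum hdiff), pd_sum _ hdiff]
  congr 1
  refine Finset.sum_congr rfl fun α _ => ?_
  exact pd_cmul_addmul (eta α) (dF2_diff hF hp β α) (dψ1_diff hψ p α)
    (dF_diff hF hp α) (dψ2_diff hψ p β α)

/-- Third-derivative swaps for `ψ`. -/
lemma swapψ (hψ : ContDiff ℝ 3 ψ) (p : Spc) (α γ : Fin 4) :
    pd α (pd γ (pd γ ψ)) p = pd γ (pd γ (pd α ψ)) p := by
  rw [pd_comm (pd_contDiffAt hψ.contDiffAt (by norm_num) γ), cψ2comm hψ α γ]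

/-- Third-derivative swaps for `fdel`. -/
lemma swapF (hF : ∀ q ∈ U, ContDiffAt ℝ 3 (fdel δ) q) (hUo : IsOpen U) (hp : p ∈ U)
    (α γ : Fin 4) :
    pd α (pd γ (pd γ (fdel δ))) p = pd γ (pd γ (pd α (fdel δ))) p := by
  rw [pd_comm (pd_contDiffAt (hF p hp) (by norm_num) γ)]
  exact pd_congr_on hUo (fun q hq => pd_comm ((hF q hq).of_le (by norm_num))) hp

/-- Derivative of `box (fdel δ)` in canonical form. -/
lemma hboxF (hF : ∀ q ∈ U, ContDiffAt ℝ 3 (fdel δ) q) (hUo : IsOpen U) (hp : p ∈ U)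
    (ν : Fin 4) :
    pd ν (box (fdel δ)) p = ∑ γ : Fin 4, eta γ * pd γ (pd γ (pd ν (fdel δ))) p := by
  have hbF : box (fdel δ) = fun q => ∑ γ : Fin 4, eta γ * pd γ (pd γ (fdel δ)) q :=
    funext (box_eq (fdel δ))
  have hdiff : ∀ γ : Fin 4, γ ∈ (Finset.univ : Finset (Fin 4)) →
      DifferentiableAt ℝ (fun q => eta γ * pd γ (pd γ (fdel δ)) q) p := fun γ _ =>
    (dF2_diff hF hp γ γ).const_mul (eta γ)
  rw [hbF, pd_sum _ hdiff]
  refine Finset.sum_congr rfl fun γ _ => ?_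
  rw [pd_cmul (eta γ) (dF2_diff hF hp γ γ), swapF hF hUo hp ν γ]

/-- Derivative of `box ψ` in canonical form. -/
lemma hboxψ (hψ : ContDiff ℝ 3 ψ) (p : Spc) (ν : Fin 4) :
    pd ν (box ψ) p = ∑ γ : Fin 4, eta γ * pd γ (pd γ (pd ν ψ)) p := by
  have hbψ : box ψ = fun q => ∑ γ : Fin 4, eta γ * pd γ (pd γ ψ) q := funext (box_eq ψ)
  have hdiff : ∀ γ : Fin 4, γ ∈ (Finset.univ : Finset (Fin 4)) →
      DifferentiableAt ℝ (fun q => eta γ * pd γ (pd γ ψ) q) p := fun γ _ =>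
    (dψ2_diff hψ p γ γ).const_mul (eta γ)
  rw [hbψ, pd_sum _ hdiff]
  refine Finset.sum_congr rfl fun γ _ => ?_
  rw [pd_cmul (eta γ) (dψ2_diff hψ p γ γ), swapψ hψ p ν γ]

/-- Derivative of `P₁ψ`. -/
lemma hP1d (hψ : ContDiff ℝ 3 ψ) (hF : ∀ q ∈ U, ContDiffAt ℝ 3 (fdel δ) q)
    (hUo : IsOpen U) (hp : p ∈ U) (α : Fin 4) :
    pd α (P1 τ δ ψ) p = (∑ γ : Fin 4, eta γ * pd γ (pd γ (pd α ψ)) p)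
      + τ^2 * ((∑ β : Fin 4, eta β *
            (pd α (pd β (fdel δ)) p * pd β (fdel δ) p
              + pd β (fdel δ) p * pd α (pd β (fdel δ)) p)) * ψ p
          + (∑ β : Fin 4, eta β * pd β (fdel δ) p * pd β (fdel δ) p) * pd α ψ p) := by
  have hQdiff : ∀ q ∈ U, DifferentiableAt ℝ
      (fun q => ∑ β : Fin 4, eta β * pd β (fdel δ) q * pd β (fdel δ) q) q := fun q hq =>
    DifferentiableAt.fun_sum fun β _ =>
      ((dF_diff hF hq β).const_mul (eta β)).fun_mul (dF_diff hF hq β)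
  have e : P1 τ δ ψ = fun q => (fun q => box ψ q) q
      + (fun q => τ^2 * (fun q => ∑ β : Fin 4,
          eta β * pd β (fdel δ) q * pd β (fdel δ) q) q * ψ q) q := rfl
  rw [e, pd_add ?hb ?hq]
  case hb =>
    have : (fun q => box ψ q) = fun q => ∑ γ : Fin 4, eta γ * pd γ (pd γ ψ) q :=
      funext (box_eq ψ)
    rw [this]
    exact DifferentiableAt.fun_sum fun γ _ => (dψ2_diff hψ p γ γ).const_mul (eta γ)
  case hq =>
    exact ((hQdiff p hp).const_mul (τ^2)).mul (hψ.differentiable (by norm_num) p)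
  have e2 : pd α (fun q => box ψ q) p = pd α (box ψ) p := rfl
  rw [e2, hboxψ hψ p α,
    pd_cmul_mul (τ^2) (hQdiff p hp) (hψ.differentiable (by norm_num) p)]
  have hQd : pd α (fun q => ∑ β : Fin 4, eta β * pd β (fdel δ) q * pd β (fdel δ) q) p
      = ∑ β : Fin 4, eta β *
          (pd α (pd β (fdel δ)) p * pd β (fdel δ) p
            + pd β (fdel δ) p * pd α (pd β (fdel δ)) p) := by
    rw [pd_sum _ (fun β _ => ((dF_diff hF hp β).const_mul (eta β)).fun_mul (dF_diff hF hp β))]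
    exact Finset.sum_congr rfl fun β _ =>
      pd_cmul_mul (eta β) (dF_diff hF hp β) (dF_diff hF hp β)
  rw [hQd]

/-- Main pointwise commutator identity on `U`. -/
lemma main_pointwise (hψ : ContDiff ℝ 3 ψ) (hF : ∀ q ∈ U, ContDiffAt ℝ 3 (fdel δ) q)
    (hUo : IsOpen U) (hp : p ∈ U) :
    P1 τ δ (P2 τ δ ψ) p - P2 τ δ (P1 τ δ ψ) p
      = -2*τ * (∑ ν : Fin 4, eta ν * pd ν (box (fdel δ)) p * pd ν ψ p)
        - 4*τ * (∑ β : Fin 4, ∑ ν : Fin 4,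
            eta β * eta ν * pd β (pd ν (fdel δ)) p * pd β (pd ν ψ) p)
        + 4*τ^3 * ψ p * (∑ α : Fin 4, ∑ β : Fin 4,
            pd α (fdel δ) p * pd β (fdel δ) p
              * (eta α * eta β * pd α (pd β (fdel δ)) p)) := by
  have e0 : P2 τ δ ψ p
      = -2*τ*∑ α : Fin 4, eta α * pd α (fdel δ) p * pd α ψ p := rfl
  have e1 : P1 τ δ (P2 τ δ ψ) p = box (P2 τ δ ψ) p
      + τ^2 * (∑ α : Fin 4, eta α * pd α (fdel δ) p * pd α (fdel δ) p)
        * P2 τ δ ψ p := rfl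
  have e2 : P2 τ δ (P1 τ δ ψ) p
      = -2*τ*∑ α : Fin 4, eta α * pd α (fdel δ) p * pd α (P1 τ δ ψ) p := rfl
  have ebox : box (P2 τ δ ψ) p = ∑ γ : Fin 4, eta γ *
      (-2*τ*∑ α : Fin 4, eta α *
        ((pd γ (pd γ (pd α (fdel δ))) p * pd α ψ p
            + pd γ (pd α (fdel δ)) p * pd γ (pd α ψ) p)
          + (pd γ (pd α (fdel δ)) p * pd γ (pd α ψ) p
            + pd α (fdel δ) p * pd γ (pd γ (pd α ψ)) p))) := by
    rw [box_eq]
    exact Finset.sum_congr rfl fun γ _ => by rw [L2 hψ hF hUo hp γ γ]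
  rw [e1, e2, ebox, e0]
  simp only [hP1d hψ hF hUo hp]
  simp only [hboxF hF hUo hp]
  simp only [Fin.sum_univ_four]
  simp only [show (eta 0 : ℝ) = -1 from rfl, show (eta 1 : ℝ) = 1 from rfl,
    show (eta 2 : ℝ) = 1 from rfl, show (eta 3 : ℝ) = 1 from rfl]
  ring

/-! ### Explicit derivatives of `fdel` -/

/-- The open set where `fdel` is smooth. -/
def Uset : Set Spc := {q | 0 < q.1 ∧ q.2 ≠ 0}

lemma Uset_open : IsOpen Uset := by
  have h1 : IsOpen {q : Spc | 0 < q.1} := isOpen_lt continuous_const continuous_fst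
  have h2 : IsOpen {q : Spc | q.2 ≠ 0} :=
    isOpen_compl_iff.2 (isClosed_eq continuous_snd continuous_const)
  exact h1.inter h2

lemma fdel_contDiffAt {δ : ℝ} {p : Spc} (hp : p ∈ Uset) (n : ℕ) :
    ContDiffAt ℝ n (fdel δ) p := by
  have h1 : ContDiffAt ℝ n (fun q : Spc => ‖q.2‖) p :=
    (contDiffAt_norm (𝕜 := ℝ) hp.2).comp p contDiff_snd.contDiffAt
  have h2 : ContDiffAt ℝ n (fun q : Spc => q.1) p := contDiff_fst.contDiffAt
  have h3 : ContDiffAt ℝ n (fun q : Spc => δ⁻¹ * q.1 ^ (-δ)) p :=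
    contDiffAt_const.mul ((Real.contDiffAt_rpow_const_of_ne (ne_of_gt hp.1)).comp p
      contDiff_fst.contDiffAt)
  exact (h1.sub h2).sub h3

/-- The Fréchet derivative of `fdel` as a continuous linear map. -/
lemma fdel_hasFDerivAt {δ : ℝ} {p : Spc} (hp : p ∈ Uset) :
    HasFDerivAt (fdel δ)
      ((((fderiv ℝ (norm : EuclideanSpace ℝ (Fin 3) → ℝ) p.2).comp
          (ContinuousLinearMap.snd ℝ ℝ (EuclideanSpace ℝ (Fin 3))))
        - ContinuousLinearMap.fst ℝ ℝ (EuclideanSpace ℝ (Fin 3)))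
        - δ⁻¹ • ((-δ * p.1 ^ (-δ - 1)) • ContinuousLinearMap.fst ℝ ℝ
            (EuclideanSpace ℝ (Fin 3)))) p := by
  have hn : HasFDerivAt (fun q : Spc => ‖q.2‖)
      ((fderiv ℝ (norm : EuclideanSpace ℝ (Fin 3) → ℝ) p.2).comp
        (ContinuousLinearMap.snd ℝ ℝ (EuclideanSpace ℝ (Fin 3)))) p :=
    (((contDiffAt_norm (𝕜 := ℝ) (n := 1) hp.2).differentiableAt
      one_ne_zero).hasFDerivAt).comp p hasFDerivAt_snd
  have hr : HasDerivAt (fun t : ℝ => t ^ (-δ)) (-δ * p.1 ^ (-δ - 1)) p.1 :=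
    Real.hasDerivAt_rpow_const (Or.inl (ne_of_gt hp.1))
  have hc : HasFDerivAt (fun q : Spc => (q.1) ^ (-δ))
      ((-δ * p.1 ^ (-δ - 1)) • ContinuousLinearMap.fst ℝ ℝ (EuclideanSpace ℝ (Fin 3))) p :=
    hr.comp_hasFDerivAt p hasFDerivAt_fst
  exact (hn.sub hasFDerivAt_fst).sub (hc.const_smul δ⁻¹)

lemma pd0_fdel {δ : ℝ} (hδ : δ ≠ 0) {p : Spc} (hp : p ∈ Uset) :
    pd 0 (fdel δ) p = -1 + p.1 ^ (-δ - 1) := by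
  have h := (fdel_hasFDerivAt (δ := δ) hp).fderiv
  unfold pd
  rw [h]
  have e0 : (eVec 0) = ((1 : ℝ), (0 : EuclideanSpace ℝ (Fin 3))) := rfl
  simp [e0]
  field_simp

lemma pdsucc_fdel {δ : ℝ} {p : Spc} (hp : p ∈ Uset) (i : Fin 3) :
    pd i.succ (fdel δ) p
      = fderiv ℝ (norm : EuclideanSpace ℝ (Fin 3) → ℝ) p.2 (EuclideanSpace.single i 1) := by
  have h := (fdel_hasFDerivAt (δ := δ) hp).fderiv
  unfold pd
  rw [h]
  have e0 : (eVec i.succ) = ((0 : ℝ), EuclideanSpace.single i (1 : ℝ)) := by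
    simp [eVec]
  simp [e0]

lemma pd0_pd0_fdel {δ : ℝ} (hδ : δ ≠ 0) {p : Spc} (hp : p ∈ Uset) :
    pd 0 (pd 0 (fdel δ)) p = (-δ - 1) * p.1 ^ (-δ - 2) := by
  have e : pd 0 (pd 0 (fdel δ)) p = pd 0 (fun q : Spc => -1 + q.1 ^ (-δ - 1)) p :=
    pd_congr_on Uset_open (fun q hq => pd0_fdel hδ hq) hp
  rw [e]
  have hr : HasDerivAt (fun t : ℝ => t ^ (-δ - 1)) ((-δ - 1) * p.1 ^ (-δ - 1 - 1)) p.1 :=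
    Real.hasDerivAt_rpow_const (Or.inl (ne_of_gt hp.1))
  have hc : HasFDerivAt (fun q : Spc => -1 + q.1 ^ (-δ - 1))
      (((-δ - 1) * p.1 ^ (-δ - 1 - 1)) • ContinuousLinearMap.fst ℝ ℝ
        (EuclideanSpace ℝ (Fin 3))) p :=
    (hr.comp_hasFDerivAt p hasFDerivAt_fst).const_add (-1)
  unfold pd
  rw [hc.fderiv]
  have e0 : (eVec 0) = ((1 : ℝ), (0 : EuclideanSpace ℝ (Fin 3))) := rfl
  rw [show (-δ - 1 - 1 : ℝ) = -δ - 2 by ring]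
  simp [e0]

lemma pd0_pdsucc_fdel {δ : ℝ} {p : Spc} (hp : p ∈ Uset) (i : Fin 3) :
    pd 0 (pd i.succ (fdel δ)) p = 0 := by
  have e : pd 0 (pd i.succ (fdel δ)) p
      = pd 0 (fun q : Spc => fderiv ℝ (norm : EuclideanSpace ℝ (Fin 3) → ℝ) q.2
          (EuclideanSpace.single i 1)) p :=
    pd_congr_on Uset_open (fun q hq => pdsucc_fdel hq i) hp
  rw [e]
  have hg : DifferentiableAt ℝ (fun x : EuclideanSpace ℝ (Fin 3) =>
      fderiv ℝ (norm : EuclideanSpace ℝ (Fin 3) → ℝ) x (EuclideanSpace.single i 1)) p.2 := by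
    have h1 : ContDiffAt ℝ 1 (fderiv ℝ (norm : EuclideanSpace ℝ (Fin 3) → ℝ)) p.2 :=
      (contDiffAt_norm (𝕜 := ℝ) (n := 2) hp.2).fderiv_right (m := 1) (by norm_num)
    exact (h1.clm_apply contDiffAt_const).differentiableAt one_ne_zero
  have hcomp : HasFDerivAt (fun q : Spc => fderiv ℝ (norm : EuclideanSpace ℝ (Fin 3) → ℝ) q.2
      (EuclideanSpace.single i 1))
      ((fderiv ℝ (fun x : EuclideanSpace ℝ (Fin 3) =>
          fderiv ℝ (norm : EuclideanSpace ℝ (Fin 3) → ℝ) x (EuclideanSpace.single i 1)) p.2).comp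
        (ContinuousLinearMap.snd ℝ ℝ (EuclideanSpace ℝ (Fin 3)))) p :=
    (hg.hasFDerivAt).comp p hasFDerivAt_snd
  unfold pd
  rw [hcomp.fderiv]
  have e0 : (eVec 0) = ((1 : ℝ), (0 : EuclideanSpace ℝ (Fin 3))) := rfl
  simp [e0]

lemma pd_sq (α : Fin 4) (p : Spc) :
    pd α (fun q : Spc => q.1 ^ 2) p = 2 * p.1 * (eVec α).1 := by
  have hr : HasDerivAt (fun t : ℝ => t ^ 2) ((2:ℕ) * p.1 ^ (2-1)) p.1 := hasDerivAt_pow 2 p.1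
  have hc : HasFDerivAt (fun q : Spc => q.1 ^ 2)
      (((2:ℕ) * p.1 ^ (2-1) : ℝ) • ContinuousLinearMap.fst ℝ ℝ (EuclideanSpace ℝ (Fin 3))) p :=
    hr.comp_hasFDerivAt p hasFDerivAt_fst
  unfold pd
  rw [hc.fderiv]
  simp

/-! ### The divergence field -/

lemma pd_cmul_mul3_mul {w1 w2 w3 w4 : Spc → ℝ} (c : ℝ)
    (h1 : DifferentiableAt ℝ w1 p) (h2 : DifferentiableAt ℝ w2 p)
    (h3 : DifferentiableAt ℝ w3 p) (h4 : DifferentiableAt ℝ w4 p) :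
    pd β (fun q => c * (w1 q * (w2 q * w3 q) * w4 q)) p
      = c * (pd β w1 p * (w2 p * w3 p) * w4 p
           + w1 p * (pd β w2 p * w3 p) * w4 p
           + w1 p * (w2 p * pd β w3 p) * w4 p
           + w1 p * (w2 p * w3 p) * pd β w4 p) := by
  have e0 : pd β (fun q => c * (w1 q * (w2 q * w3 q) * w4 q)) p
      = c * pd β (fun q => w1 q * (w2 q * w3 q) * w4 q) p :=
    pd_cmul c ((h1.mul (h2.mul h3)).mul h4)
  have eA : pd β (fun q => w1 q * (w2 q * w3 q) * w4 q) p
      = pd β (fun q => w1 q * (w2 q * w3 q)) p * w4 p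
        + (w1 p * (w2 p * w3 p)) * pd β w4 p :=
    pd_mul (h1.mul (h2.mul h3)) h4
  have eB : pd β (fun q => w1 q * (w2 q * w3 q)) p
      = pd β w1 p * (w2 p * w3 p) + w1 p * pd β (fun q => w2 q * w3 q) p :=
    pd_mul h1 (h2.mul h3)
  have eC : pd β (fun q => w2 q * w3 q) p = pd β w2 p * w3 p + w2 p * pd β w3 p :=
    pd_mul h2 h3
  rw [e0, eA, eB, eC]; ring

/-- The vector field whose divergence realizes the integration by parts. -/
def Gfun (τ δ : ℝ) (ψ : Spc → ℝ) (β : Fin 4) (q : Spc) : ℝ :=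
  ∑ ν : Fin 4, -4*τ*(eta β * eta ν) *
    (pd β (pd ν (fdel δ)) q * (ψ q * pd ν ψ q) * q.1 ^ 2)

/-- Explicit formula for `pd β (Gfun β)`. -/
def HD (τ δ : ℝ) (ψ : Spc → ℝ) (β : Fin 4) (p : Spc) : ℝ :=
  ∑ ν : Fin 4, -4*τ*(eta β * eta ν) *
    (pd β (pd β (pd ν (fdel δ))) p * (ψ p * pd ν ψ p) * p.1 ^ 2
      + pd β (pd ν (fdel δ)) p * (pd β ψ p * pd ν ψ p) * p.1 ^ 2
      + pd β (pd ν (fdel δ)) p * (ψ p * pd β (pd ν ψ) p) * p.1 ^ 2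
      + pd β (pd ν (fdel δ)) p * (ψ p * pd ν ψ p) * (2 * p.1 * (eVec β).1))

lemma sq_diff (p : Spc) : DifferentiableAt ℝ (fun q : Spc => q.1 ^ 2) p :=
  (differentiableAt_fst).pow 2

lemma Gfun_pd (hψ : ContDiff ℝ 3 ψ) (hF : ∀ q ∈ U, ContDiffAt ℝ 3 (fdel δ) q)
    (hp : p ∈ U) (β : Fin 4) :
    pd β (Gfun τ δ ψ β) p = HD τ δ ψ β p := by
  have hd : ∀ ν : Fin 4, ν ∈ (Finset.univ : Finset (Fin 4)) → DifferentiableAt ℝ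
      (fun q => -4*τ*(eta β * eta ν) *
        (pd β (pd ν (fdel δ)) q * (ψ q * pd ν ψ q) * q.1 ^ 2)) p := fun ν _ =>
    (((dF2_diff hF hp β ν).mul ((hψ.differentiable (by norm_num) p).mul
      (dψ1_diff hψ p ν))).mul (sq_diff p)).const_mul _
  have e : pd β (Gfun τ δ ψ β) p = ∑ ν : Fin 4, pd β
      (fun q => -4*τ*(eta β * eta ν) *
        (pd β (pd ν (fdel δ)) q * (ψ q * pd ν ψ q) * q.1 ^ 2)) p :=
    pd_sum _ hd
  rw [e]
  refine Finset.sum_congr rfl fun ν _ => ?_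
  have e2 := pd_cmul_mul3_mul (β := β) (p := p) (c := -4*τ*(eta β * eta ν))
    (w4 := fun q : Spc => q.1 ^ 2)
    (dF2_diff hF hp β ν) (hψ.differentiable (by norm_num) p) (dψ1_diff hψ p ν) (sq_diff p)
  rw [e2, pd_sq]

/-! ### Vanishing off the support -/

lemma psi_ev {ψ : Spc → ℝ} {q : Spc} (hq : q ∉ tsupport ψ) :
    ψ =ᶠ[𝓝 q] fun _ => (0:ℝ) :=
  Filter.eventually_of_mem ((isClosed_tsupport ψ).isOpen_compl.mem_nhds hq)
    fun x hx => image_eq_zero_of_notMem_tsupport hx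

lemma pdψ_zero {ψ : Spc → ℝ} {q : Spc} (hq : q ∉ tsupport ψ) (α : Fin 4) :
    pd α ψ q = 0 := by
  rw [pd_congr (psi_ev hq), pd_const]

lemma pdψ_ev {ψ : Spc → ℝ} {q : Spc} (hq : q ∉ tsupport ψ) (α : Fin 4) :
    pd α ψ =ᶠ[𝓝 q] fun _ => (0:ℝ) :=
  Filter.eventually_of_mem ((isClosed_tsupport ψ).isOpen_compl.mem_nhds hq)
    fun x hx => pdψ_zero hx α

lemma pd2ψ_zero {ψ : Spc → ℝ} {q : Spc} (hq : q ∉ tsupport ψ) (α β : Fin 4) :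
    pd β (pd α ψ) q = 0 := by
  rw [pd_congr (pdψ_ev hq α), pd_const]

lemma HD_zero {q : Spc} (hq : q ∉ tsupport ψ) (β : Fin 4) : HD τ δ ψ β q = 0 := by
  have h0 : ψ q = 0 := image_eq_zero_of_notMem_tsupport hq
  unfold HD
  refine Finset.sum_eq_zero fun ν _ => ?_
  rw [h0, pdψ_zero hq ν]
  ring

lemma Gfun_zero {q : Spc} (hq : q ∉ tsupport ψ) (β : Fin 4) : Gfun τ δ ψ β q = 0 := by
  have h0 : ψ q = 0 := image_eq_zero_of_notMem_tsupport hq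
  unfold Gfun
  refine Finset.sum_eq_zero fun ν _ => ?_
  rw [h0]
  ring

lemma Gfun_ev_zero {q : Spc} (hq : q ∉ tsupport ψ) (β : Fin 4) :
    Gfun τ δ ψ β =ᶠ[𝓝 q] fun _ => (0:ℝ) :=
  Filter.eventually_of_mem ((isClosed_tsupport ψ).isOpen_compl.mem_nhds hq)
    fun x hx => Gfun_zero hx β

lemma pd_Gfun_zero {q : Spc} (hq : q ∉ tsupport ψ) (α β : Fin 4) :
    pd α (Gfun τ δ ψ β) q = 0 := by
  rw [pd_congr (Gfun_ev_zero hq β), pd_const]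

/-! ### Continuity and integration -/

lemma continuous_of_cover {g ψ : Spc → ℝ} {U : Set Spc} (hUo : IsOpen U)
    (hsub : tsupport ψ ⊆ U) (hU : ∀ p ∈ U, ContinuousAt g p)
    (h0 : ∀ q, q ∉ tsupport ψ → g q = 0) : Continuous g := by
  rw [continuous_iff_continuousAt]; intro p
  by_cases hp : p ∈ U
  · exact hU p hp
  · have hev : g =ᶠ[𝓝 p] fun _ => (0:ℝ) :=
      Filter.eventually_of_mem ((isClosed_tsupport ψ).isOpen_compl.mem_nhds
        (fun hm => hp (hsub hm))) h0
    exact ContinuousAt.congr continuousAt_const hev.symm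

lemma hcs_of {g ψ : Spc → ℝ} (hc : HasCompactSupport ψ)
    (h0 : ∀ q, q ∉ tsupport ψ → g q = 0) : HasCompactSupport g :=
  IsCompact.of_isClosed_subset hc isClosed_closure
    (closure_minimal (fun x hx => by_contra fun hn => hx (h0 x hn)) (isClosed_tsupport ψ))

lemma contAt_F1 (hF : ∀ q ∈ U, ContDiffAt ℝ 3 (fdel δ) q) (hp : p ∈ U) (α : Fin 4) :
    ContinuousAt (pd α (fdel δ)) p :=
  (pd_contDiffAt (hF p hp) (show 2 + 1 ≤ 3 by norm_num) α).continuousAt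

lemma contAt_F2 (hF : ∀ q ∈ U, ContDiffAt ℝ 3 (fdel δ) q) (hp : p ∈ U) (α β : Fin 4) :
    ContinuousAt (pd α (pd β (fdel δ))) p :=
  (pd_contDiffAt (pd_contDiffAt (hF p hp) (show 2 + 1 ≤ 3 by norm_num) β)
    (show 1 + 1 ≤ 2 by norm_num) α).continuousAt

lemma contAt_F3 (hF : ∀ q ∈ U, ContDiffAt ℝ 3 (fdel δ) q) (hp : p ∈ U) (α β γ : Fin 4) :
    ContinuousAt (pd α (pd β (pd γ (fdel δ)))) p :=
  (pd_contDiffAt (pd_contDiffAt (pd_contDiffAt (hF p hp) (show 2 + 1 ≤ 3 by norm_num) γ)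
    (show 1 + 1 ≤ 2 by norm_num) β) (show 0 + 1 ≤ 1 by norm_num) α).continuousAt

lemma cont_s1 (hψ : ContDiff ℝ 3 ψ) (α : Fin 4) : Continuous (pd α ψ) :=
  continuous_iff_continuousAt.2 fun p =>
    (pd_contDiffAt hψ.contDiffAt (show 2 + 1 ≤ 3 by norm_num) α).continuousAt

lemma cont_s2 (hψ : ContDiff ℝ 3 ψ) (α β : Fin 4) : Continuous (pd α (pd β ψ)) :=
  continuous_iff_continuousAt.2 fun p =>
    (pd_contDiffAt (pd_contDiffAt hψ.contDiffAt (show 2 + 1 ≤ 3 by norm_num) β)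
      (show 1 + 1 ≤ 2 by norm_num) α).continuousAt

lemma contAt_boxF (hF : ∀ q ∈ U, ContDiffAt ℝ 3 (fdel δ) q) (hUo : IsOpen U) (hp : p ∈ U)
    (ν : Fin 4) : ContinuousAt (pd ν (box (fdel δ))) p := by
  have hev : pd ν (box (fdel δ)) =ᶠ[𝓝 p]
      fun q => ∑ γ : Fin 4, eta γ * pd γ (pd γ (pd ν (fdel δ))) q :=
    Filter.eventually_of_mem (hUo.mem_nhds hp) fun q hq => hboxF hF hUo hq ν
  refine ContinuousAt.congr ?_ hev.symm
  exact tendsto_finset_sum _ fun γ _ =>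
    (continuousAt_const.mul (contAt_F3 hF hp γ γ ν))

instance : (volume : Measure Spc).IsAddHaarMeasure :=
  (show ((volume : Measure ℝ).prod (volume : Measure (EuclideanSpace ℝ (Fin 3)))).IsAddHaarMeasure
    by infer_instance)

lemma Gfun_diffAt (hψ : ContDiff ℝ 3 ψ) (hF : ∀ q ∈ Uset, ContDiffAt ℝ 3 (fdel δ) q)
    (hsub : tsupport ψ ⊆ Uset) (β : Fin 4) : Differentiable ℝ (Gfun τ δ ψ β) := by
  intro q
  by_cases hq : q ∈ Uset
  · exact DifferentiableAt.fun_sum fun ν _ =>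
      (((dF2_diff hF hq β ν).fun_mul ((hψ.differentiable (by norm_num) q).fun_mul
        (dψ1_diff hψ q ν))).fun_mul (sq_diff q)).const_mul _
  · exact (Gfun_ev_zero (fun hm => hq (hsub hm)) β).differentiableAt_iff.2
      (differentiableAt_const 0)

lemma HD_cont (hψ : ContDiff ℝ 3 ψ) (hF : ∀ q ∈ Uset, ContDiffAt ℝ 3 (fdel δ) q)
    (hsub : tsupport ψ ⊆ Uset) (β : Fin 4) : Continuous (HD τ δ ψ β) := by
  refine continuous_of_cover Uset_open hsub (fun p hp => ?_) (fun q hq => HD_zero hq β)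
  refine tendsto_finset_sum _ fun ν _ => ?_
  have c1 : ContinuousAt (fun q : Spc => q.1 ^ 2) p := (continuous_fst.pow 2).continuousAt
  have c2 : ContinuousAt (fun q : Spc => 2 * q.1 * (eVec β).1) p :=
    ((continuous_const.mul continuous_fst).mul continuous_const).continuousAt
  have cψ : ContinuousAt ψ p := hψ.continuous.continuousAt
  refine continuousAt_const.mul (ContinuousAt.add (ContinuousAt.add (ContinuousAt.add ?_ ?_) ?_) ?_)
  · exact ((contAt_F3 hF hp β β ν).mul (cψ.mul (cont_s1 hψ ν).continuousAt)).mul c1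
  · exact ((contAt_F2 hF hp β ν).mul ((cont_s1 hψ β).continuousAt.mul
      (cont_s1 hψ ν).continuousAt)).mul c1
  · exact ((contAt_F2 hF hp β ν).mul (cψ.mul (cont_s2 hψ β ν).continuousAt)).mul c1
  · exact ((contAt_F2 hF hp β ν).mul (cψ.mul (cont_s1 hψ ν).continuousAt)).mul c2
lemma Gfun_cont (hψ : ContDiff ℝ 3 ψ) (hF : ∀ q ∈ Uset, ContDiffAt ℝ 3 (fdel δ) q)
    (hsub : tsupport ψ ⊆ Uset) (β : Fin 4) : Continuous (Gfun τ δ ψ β) := by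
  refine continuous_of_cover Uset_open hsub (fun p hp => ?_) (fun q hq => Gfun_zero hq β)
  refine tendsto_finset_sum _ fun ν _ => ?_
  exact continuousAt_const.mul (((contAt_F2 hF hp β ν).mul
    (hψ.continuous.continuousAt.mul (cont_s1 hψ ν).continuousAt)).mul
      (continuous_fst.pow 2).continuousAt)

lemma HD_integrable (hψ : ContDiff ℝ 3 ψ) (hc : HasCompactSupport ψ)
    (hF : ∀ q ∈ Uset, ContDiffAt ℝ 3 (fdel δ) q) (hsub : tsupport ψ ⊆ Uset) (β : Fin 4) :
    Integrable (HD τ δ ψ β) volume :=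
  (HD_cont hψ hF hsub β).integrable_of_hasCompactSupport
    (hcs_of hc fun q hq => HD_zero hq β)

lemma HD_integral_zero (hψ : ContDiff ℝ 3 ψ) (hc : HasCompactSupport ψ)
    (hF : ∀ q ∈ Uset, ContDiffAt ℝ 3 (fdel δ) q) (hsub : tsupport ψ ⊆ Uset) (β : Fin 4) :
    ∫ q, HD τ δ ψ β q = 0 := by
  have hGHD : ∀ q, pd β (Gfun τ δ ψ β) q = HD τ δ ψ β q := fun q => by
    by_cases hq : q ∈ Uset
    · exact Gfun_pd hψ hF hq β
    · have hq' : q ∉ tsupport ψ := fun hm => hq (hsub hm)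
      rw [pd_Gfun_zero hq', HD_zero hq']
  have hGint : Integrable (Gfun τ δ ψ β) volume :=
    (Gfun_cont hψ hF hsub β).integrable_of_hasCompactSupport
      (hcs_of hc fun q hq => Gfun_zero hq β)
  have e1 : (fun x => fderiv ℝ (Gfun τ δ ψ β) x (eVec β) * (fun _ => (1:ℝ)) x)
      = HD τ δ ψ β := funext fun x => by
    rw [show (fun _ => (1:ℝ)) x = 1 from rfl, mul_one]; exact hGHD x
  have e2 : (fun x => Gfun τ δ ψ β x * fderiv ℝ (fun _ => (1:ℝ)) x (eVec β))
      = fun _ => (0:ℝ) := funext fun x => by simp [fderiv_const]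
  have key := integral_mul_fderiv_eq_neg_fderiv_mul_of_integrable (μ := volume)
    (f := Gfun τ δ ψ β) (g := fun _ => (1:ℝ)) (v := eVec β)
    (by rw [e1]; exact HD_integrable hψ hc hF hsub β)
    (by rw [e2]; exact integrable_zero _ _ _)
    (by simpa using hGint)
    (fun x _ => Gfun_diffAt hψ hF hsub β x) (fun x _ => differentiableAt_const 1)
  rw [e2] at key
  rw [e1] at key
  simpa using key.symm

/-- Full pointwise key identity on `Uset`. -/
lemma fullkey (hψ : ContDiff ℝ 3 ψ) (hδ : δ ≠ 0)
    (hF : ∀ q ∈ Uset, ContDiffAt ℝ 3 (fdel δ) q) (hp : p ∈ Uset) :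
    (P1 τ δ (P2 τ δ ψ) p - P2 τ δ (P1 τ δ ψ) p) * ψ p * p.1 ^ 2
      - τ * Bform τ δ ψ p * p.1 ^ 2
      - (2*τ) * (ψ p * (∑ ν : Fin 4, eta ν * pd ν (box (fdel δ)) p * pd ν ψ p) * p.1 ^ 2)
      + (8*τ*(δ+1)) * ((p.1 ^ (-δ-3) * ψ p) * dt ψ p * p.1 ^ 2)
      = ∑ β : Fin 4, HD τ δ ψ β p := by
  rw [main_pointwise hψ hF Uset_open hp]
  unfold Bform HD dt
  simp only [hboxF hF Uset_open hp]
  simp only [Fin.sum_univ_four]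
  rw [pd0_pd0_fdel hδ hp,
     show pd 0 (pd 1 (fdel δ)) p = 0 from pd0_pdsucc_fdel hp 0,
     show pd 0 (pd 2 (fdel δ)) p = 0 from pd0_pdsucc_fdel hp 1,
     show pd 0 (pd 3 (fdel δ)) p = 0 from pd0_pdsucc_fdel hp 2]
  rw [show (p.1 : ℝ) ^ (-δ-2) = p.1 ^ (-δ-3) * p.1 by
    rw [show (-δ-2 : ℝ) = (-δ-3) + 1 by ring, Real.rpow_add_one (ne_of_gt hp.1)]]
  simp only [show (eta 0 : ℝ) = -1 from rfl, show (eta 1 : ℝ) = 1 from rfl,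
    show (eta 2 : ℝ) = 1 from rfl, show (eta 3 : ℝ) = 1 from rfl,
    show ((eVec 0).1 : ℝ) = 1 from rfl, show ((eVec 1).1 : ℝ) = 0 from rfl,
    show ((eVec 2).1 : ℝ) = 0 from rfl, show ((eVec 3).1 : ℝ) = 0 from rfl]
  ring

lemma Bform_zero {q : Spc} (hq : q ∉ tsupport ψ) : Bform τ δ ψ q = 0 := by
  have h0 : ψ q = 0 := image_eq_zero_of_notMem_tsupport hq
  unfold Bform
  rw [h0]
  simp [pdψ_zero hq]

lemma int_B (hψ : ContDiff ℝ 3 ψ) (hc : HasCompactSupport ψ)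
    (hF : ∀ q ∈ Uset, ContDiffAt ℝ 3 (fdel δ) q) (hsub : tsupport ψ ⊆ Uset) :
    Integrable (fun p : Spc => τ * Bform τ δ ψ p * p.1 ^ 2) volume := by
  have h0 : ∀ q, q ∉ tsupport ψ → τ * Bform τ δ ψ q * q.1 ^ 2 = 0 := fun q hq => by
    rw [Bform_zero hq]; ring
  refine (continuous_of_cover Uset_open hsub (fun p hp => ?_) h0).integrable_of_hasCompactSupport
    (hcs_of hc h0)
  have c1 : ContinuousAt (fun q : Spc => q.1 ^ 2) p := (continuous_fst.pow 2).continuousAt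
  have cψ : ContinuousAt ψ p := hψ.continuous.continuousAt
  refine ContinuousAt.mul (continuousAt_const.mul ?_) c1
  unfold Bform
  refine ContinuousAt.add (continuousAt_const.mul ?_)
    ((continuousAt_const.mul (cψ.pow 2)).mul ?_)
  · exact tendsto_finset_sum _ fun β _ => tendsto_finset_sum _ fun ν _ =>
      (((continuousAt_const.mul (contAt_F2 hF hp β ν)).mul
        (cont_s1 hψ β).continuousAt).mul (cont_s1 hψ ν).continuousAt)
  · exact tendsto_finset_sum _ fun α _ => tendsto_finset_sum _ fun β _ =>
      ((contAt_F1 hF hp α).mul (contAt_F1 hF hp β)).mul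
        (continuousAt_const.mul (contAt_F2 hF hp α β))

lemma int_C (hψ : ContDiff ℝ 3 ψ) (hc : HasCompactSupport ψ)
    (hF : ∀ q ∈ Uset, ContDiffAt ℝ 3 (fdel δ) q) (hsub : tsupport ψ ⊆ Uset) :
    Integrable (fun p : Spc =>
      ψ p * (∑ ν : Fin 4, eta ν * pd ν (box (fdel δ)) p * pd ν ψ p) * p.1 ^ 2) volume := by
  have h0 : ∀ q, q ∉ tsupport ψ →
      ψ q * (∑ ν : Fin 4, eta ν * pd ν (box (fdel δ)) q * pd ν ψ q) * q.1 ^ 2 = 0 :=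
    fun q hq => by rw [image_eq_zero_of_notMem_tsupport hq]; ring
  refine (continuous_of_cover Uset_open hsub (fun p hp => ?_) h0).integrable_of_hasCompactSupport
    (hcs_of hc h0)
  exact (hψ.continuous.continuousAt.mul (tendsto_finset_sum _ fun ν _ =>
    (continuousAt_const.mul (contAt_boxF hF Uset_open hp ν)).mul
      (cont_s1 hψ ν).continuousAt)).mul (continuous_fst.pow 2).continuousAt

lemma int_D (hψ : ContDiff ℝ 3 ψ) (hc : HasCompactSupport ψ)
    (hsub : tsupport ψ ⊆ Uset) :
    Integrable (fun p : Spc => p.1 ^ (-δ - 3) * ψ p * dt ψ p * p.1 ^ 2) volume := by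
  have h0 : ∀ q, q ∉ tsupport ψ → q.1 ^ (-δ - 3) * ψ q * dt ψ q * q.1 ^ 2 = 0 :=
    fun q hq => by rw [image_eq_zero_of_notMem_tsupport hq]; ring
  refine (continuous_of_cover Uset_open hsub (fun p hp => ?_) h0).integrable_of_hasCompactSupport
    (hcs_of hc h0)
  have crpow : ContinuousAt (fun q : Spc => q.1 ^ (-δ - 3)) p :=
    (Real.continuousAt_rpow_const p.1 (-δ - 3) (Or.inl (ne_of_gt hp.1))).comp
      continuousAt_fst
  exact ((crpow.mul hψ.continuous.continuousAt).mul
    (cont_s1 hψ 0).continuousAt).mul (continuous_fst.pow 2).continuousAt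

end Pointwise

/-- Lemma 3.5 of the paper: exact expansion of `⟨[P₁,P₂]ψ, ψ⟩`. -/
theorem stmt7 (T₀ R'' τ δ : ℝ) (hT₀ : 0 < T₀) (hTR : 0 < T₀ + R'') (hτ : 0 < τ)
    (hδ0 : 0 < δ) (hδ : δ < 1 / 2)
    (ψ : Spc → ℝ) (hψ : ContDiff ℝ 3 ψ) (hc : HasCompactSupport ψ)
    (hs : tsupport ψ ⊆ OmO T₀ R'') :
    ip T₀ R'' (fun p => P1 τ δ (P2 τ δ ψ) p - P2 τ δ (P1 τ δ ψ) p) ψ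
      = (∫ p in Om T₀ R'', τ * Bform τ δ ψ p * p.1 ^ 2)
        + 2 * τ * ip T₀ R'' ψ
            (fun p => ∑ ν : Fin 4, eta ν * pd ν (box (fdel δ)) p * pd ν ψ p)
        - 8 * τ * (δ + 1) * ip T₀ R'' (fun p => p.1 ^ (-δ - 3) * ψ p) (dt ψ) := by
  have hδne : δ ≠ 0 := ne_of_gt hδ0
  have hsub : tsupport ψ ⊆ Uset := by
    intro q hq
    obtain ⟨h1, h2⟩ := hs hq
    have hrr : rr q = ‖q.2‖ := rfl
    refine ⟨hT₀.trans h1, ?_⟩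
    have hr : 0 < ‖q.2‖ := by rw [hrr] at h2; linarith
    exact fun h => by rw [h] at hr; simp at hr
  have hF : ∀ q ∈ Uset, ContDiffAt ℝ 3 (fdel δ) q := fun q hq => fdel_contDiffAt hq 3
  have hOmsub : tsupport ψ ⊆ Om T₀ R'' := fun q hq => ⟨le_of_lt (hs hq).1, (hs hq).2⟩
  have key : ∀ q : Spc,
      (P1 τ δ (P2 τ δ ψ) q - P2 τ δ (P1 τ δ ψ) q) * ψ q * q.1 ^ 2
        = (((∑ β : Fin 4, HD τ δ ψ β q) + τ * Bform τ δ ψ q * q.1 ^ 2)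
            + (2 * τ) * (ψ q * (∑ ν : Fin 4,
                eta ν * pd ν (box (fdel δ)) q * pd ν ψ q) * q.1 ^ 2))
          - (8 * τ * (δ + 1)) * (q.1 ^ (-δ - 3) * ψ q * dt ψ q * q.1 ^ 2) := by
    intro q
    by_cases hq : q ∈ Uset
    · have h := fullkey (τ := τ) hψ hδne hF hq
      linarith [h]
    · have hq' : q ∉ tsupport ψ := fun hm => hq (hsub hm)
      have h0 : ψ q = 0 := image_eq_zero_of_notMem_tsupport hq'
      have hS : (∑ β : Fin 4, HD τ δ ψ β q) = 0 :=
        Finset.sum_eq_zero fun β _ => HD_zero hq' β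
      rw [h0, hS, Bform_zero hq']
      ring
  have iS : Integrable (fun q => ∑ β : Fin 4, HD τ δ ψ β q)
      (volume.restrict (Om T₀ R'')) :=
    (integrable_finset_sum _ fun β _ => HD_integrable hψ hc hF hsub β).restrict
  have iB : Integrable (fun q : Spc => τ * Bform τ δ ψ q * q.1 ^ 2)
      (volume.restrict (Om T₀ R'')) := (int_B hψ hc hF hsub).restrict
  have iC : Integrable (fun q : Spc => (2 * τ) * (ψ q * (∑ ν : Fin 4,
      eta ν * pd ν (box (fdel δ)) q * pd ν ψ q) * q.1 ^ 2))
      (volume.restrict (Om T₀ R'')) := ((int_C hψ hc hF hsub).restrict).const_mul _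
  have iD : Integrable (fun q : Spc => (8 * τ * (δ + 1)) *
      (q.1 ^ (-δ - 3) * ψ q * dt ψ q * q.1 ^ 2))
      (volume.restrict (Om T₀ R'')) := ((int_D hψ hc hsub).restrict).const_mul _
  have hS0 : (∫ q in Om T₀ R'', ∑ β : Fin 4, HD τ δ ψ β q) = 0 := by
    rw [integral_finset_sum _ fun β _ => (HD_integrable hψ hc hF hsub β).integrableOn]
    refine Finset.sum_eq_zero fun β _ => ?_
    rw [setIntegral_eq_integral_of_forall_compl_eq_zero
      (fun x hx => HD_zero (fun hm => hx (hOmsub hm)) β)]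
    exact HD_integral_zero hψ hc hF hsub β
  show (∫ p in Om T₀ R'', (P1 τ δ (P2 τ δ ψ) p - P2 τ δ (P1 τ δ ψ) p) * ψ p * p.1 ^ 2)
      = (∫ p in Om T₀ R'', τ * Bform τ δ ψ p * p.1 ^ 2)
        + 2 * τ * (∫ p in Om T₀ R'', ψ p * (∑ ν : Fin 4,
            eta ν * pd ν (box (fdel δ)) p * pd ν ψ p) * p.1 ^ 2)
        - 8 * τ * (δ + 1) * (∫ p in Om T₀ R'',
            (p.1 ^ (-δ - 3) * ψ p) * dt ψ p * p.1 ^ 2)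
  have e0 : (∫ p in Om T₀ R'', (P1 τ δ (P2 τ δ ψ) p - P2 τ δ (P1 τ δ ψ) p) * ψ p * p.1 ^ 2)
      = ∫ q in Om T₀ R'', ((((∑ β : Fin 4, HD τ δ ψ β q) + τ * Bform τ δ ψ q * q.1 ^ 2)
            + (2 * τ) * (ψ q * (∑ ν : Fin 4,
                eta ν * pd ν (box (fdel δ)) q * pd ν ψ q) * q.1 ^ 2))
          - (8 * τ * (δ + 1)) * (q.1 ^ (-δ - 3) * ψ q * dt ψ q * q.1 ^ 2)) := by
    exact integral_congr_ae (Filter.Eventually.of_forall fun q => key q)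
  have iSB : Integrable (fun q : Spc => (∑ β : Fin 4, HD τ δ ψ β q)
      + τ * Bform τ δ ψ q * q.1 ^ 2) (volume.restrict (Om T₀ R'')) := iS.add iB
  have iSBC : Integrable (fun q : Spc => ((∑ β : Fin 4, HD τ δ ψ β q)
      + τ * Bform τ δ ψ q * q.1 ^ 2)
      + (2 * τ) * (ψ q * (∑ ν : Fin 4,
          eta ν * pd ν (box (fdel δ)) q * pd ν ψ q) * q.1 ^ 2))
      (volume.restrict (Om T₀ R'')) := iSB.add iC
  rw [e0, integral_sub iSBC iD, integral_add iSB iC,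
    integral_add iS iB, integral_const_mul, integral_const_mul, hS0]
  ring

end UCP
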